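/- Let A, B, X, Y, C be finitely-valued random variables on a common probability space and let t ≥ 0 be a real number. Suppose that H[X,Y] ≤ 3t, H[A,X] ≤ 3t, H[A,Y] ≤ 3t, H[B,X] ≤ 3t, H[B,Y] ≤ 3t, and H[C] ≤ 2t, and that each of the six conditional entropies H[A,B,X,Y,C | A,B], H[A,B,X,Y,C | A,X,Y], H[A,B,X,Y,C | B,X,Y], H[A,B,X,Y,C | A,C], H[A,B,X,Y,C | X,C], H[A,B,X,Y,C | Y,C] is zero. Then H[A,B,X,Y,C] ≤ (43/11)·t. -/

import Mathlib

/-- Shannon entropy (base 2) of the random variable `f` on a finite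
probability space with mass function `p`. -/
noncomputable def entropy {Ω α : Type*} [Fintype Ω] (p : Ω → ℝ) (f : Ω → α) : ℝ :=
  letI := Classical.decEq α
  ∑ y ∈ Finset.univ.image f,
    -((∑ ω ∈ Finset.univ.filter (fun ω => f ω = y), p ω) *
        Real.logb 2 (∑ ω ∈ Finset.univ.filter (fun ω => f ω = y), p ω))

/-- Conditional entropy `H[f | g] := H[f, g] − H[g]`. -/
noncomputable def condEntropy {Ω α β : Type*} [Fintype Ω]
    (p : Ω → ℝ) (f : Ω → α) (g : Ω → β) : ℝ :=
  entropy p (fun ω => (f ω, g ω)) - entropy p g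

noncomputable def massFn {Ω α : Type*} [Fintype Ω] (p : Ω → ℝ) (f : Ω → α) (y : α) : ℝ :=
  letI := Classical.decEq α
  ∑ ω ∈ Finset.univ.filter (fun ω => f ω = y), p ω

section Basics
open Finset Real
variable {Ω α β γ : Type*} [Fintype Ω] (p : Ω → ℝ)

lemma massFn_def {Ω α : Type*} [Fintype Ω] (p : Ω → ℝ) (f : Ω → α) [DecidableEq α] (y : α) :
    massFn p f y = ∑ ω ∈ Finset.univ.filter (fun ω => f ω = y), p ω := by
  unfold massFn
  congr 1
  exact Finset.filter_congr_decidable _ _ _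

lemma massFn_nonneg (hp : ∀ ω, 0 ≤ p ω) (f : Ω → α) (y : α) : 0 ≤ massFn p f y :=
  Finset.sum_nonneg fun ω _ => hp ω

lemma massFn_le_one (hp : ∀ ω, 0 ≤ p ω) (hp1 : ∑ ω, p ω = 1) (f : Ω → α) (y : α) :
    massFn p f y ≤ 1 := by
  rw [← hp1]
  exact Finset.sum_le_sum_of_subset_of_nonneg (Finset.subset_univ _) (fun ω _ _ => hp ω)

lemma le_massFn (hp : ∀ ω, 0 ≤ p ω) (f : Ω → α) (ω : Ω) : p ω ≤ massFn p f (f ω) := by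
  letI := Classical.decEq α
  exact Finset.single_le_sum (f := fun ω => p ω) (fun ω' _ => hp ω') (by simp [massFn])

lemma massFn_le_massFn (hp : ∀ ω, 0 ≤ p ω) {f : Ω → α} {g : Ω → β} {y : α} {z : β}
    (h : ∀ ω, f ω = y → g ω = z) : massFn p f y ≤ massFn p g z := by
  letI := Classical.decEq α
  letI := Classical.decEq β
  apply Finset.sum_le_sum_of_subset_of_nonneg
  · intro ω hω
    simp only [Finset.mem_filter, Finset.mem_univ, true_and] at hω ⊢
    exact h ω hω
  · exact fun ω _ _ => hp ω

lemma sum_massFn [Fintype α] (f : Ω → α) : ∑ y, massFn p f y = ∑ ω, p ω := by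
  letI := Classical.decEq α
  exact Finset.sum_fiberwise _ _ _

/-- entropy as a sum over the sample space. -/
lemma entropy_eq_omega (f : Ω → α) :
    entropy p f = -∑ ω, p ω * Real.logb 2 (massFn p f (f ω)) := by
  letI := Classical.decEq α
  have h1 : (∑ ω, p ω * Real.logb 2 (massFn p f (f ω)))
      = ∑ y ∈ Finset.univ.image f, ∑ ω ∈ Finset.univ.filter (fun ω => f ω = y),
          p ω * Real.logb 2 (massFn p f (f ω)) :=
    (Finset.sum_fiberwise_of_maps_to (fun ω _ => Finset.mem_image_of_mem f (Finset.mem_univ ω)) _).symm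
  have h2 : ∀ y ∈ Finset.univ.image f,
      ∑ ω ∈ Finset.univ.filter (fun ω => f ω = y), p ω * Real.logb 2 (massFn p f (f ω))
      = massFn p f y * Real.logb 2 (massFn p f y) := by
    intro y _
    rw [show (∑ ω ∈ Finset.univ.filter (fun ω => f ω = y), p ω * Real.logb 2 (massFn p f (f ω)))
        = ∑ ω ∈ Finset.univ.filter (fun ω => f ω = y), p ω * Real.logb 2 (massFn p f y) from
      Finset.sum_congr rfl (by
        intro ω hω
        simp only [Finset.mem_filter] at hω
        rw [hω.2])]
    rw [← Finset.sum_mul]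
    rfl
  rw [h1, Finset.sum_congr rfl h2]
  show entropy p f = -∑ y ∈ Finset.univ.image f, massFn p f y * Real.logb 2 (massFn p f y)
  rw [entropy, ← Finset.sum_neg_distrib]
  rfl

lemma entropy_eq_univ [Fintype α] (f : Ω → α) :
    entropy p f = ∑ y, -(massFn p f y * Real.logb 2 (massFn p f y)) := by
  letI := Classical.decEq α
  rw [show entropy p f = ∑ y ∈ Finset.univ.image f,
      -(massFn p f y * Real.logb 2 (massFn p f y)) from rfl]
  apply Finset.sum_subset (Finset.subset_univ _)
  intro y _ hy
  have h0 : massFn p f y = 0 := by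
    apply Finset.sum_eq_zero
    intro ω hω
    simp only [Finset.mem_filter, Finset.mem_univ, true_and] at hω
    exact absurd (hω ▸ Finset.mem_image_of_mem f (Finset.mem_univ ω)) hy
  rw [h0]
  simp

lemma entropy_eq_of_massFn {Ω' : Type*} [Fintype Ω'] [Fintype α] {p' : Ω' → ℝ}
    {f : Ω → α} {g : Ω' → α} (h : ∀ y, massFn p f y = massFn p' g y) :
    entropy p f = entropy p' g := by
  rw [entropy_eq_univ, entropy_eq_univ]
  exact Finset.sum_congr rfl fun y _ => by rw [h y]

lemma entropy_congr {f : Ω → α} {g : Ω → β}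
    (h : ∀ ω ω', f ω = f ω' ↔ g ω = g ω') :
    entropy p f = entropy p g := by
  letI := Classical.decEq α
  letI := Classical.decEq β
  rw [entropy_eq_omega, entropy_eq_omega]
  congr 1
  apply Finset.sum_congr rfl
  intro ω _
  have : massFn p f (f ω) = massFn p g (g ω) := by
    unfold massFn
    apply Finset.sum_congr _ (fun _ _ => rfl)
    apply Finset.filter_congr
    intro ω' _
    simpa using h ω' ω
  rw [this]

lemma entropy_nonneg (hp : ∀ ω, 0 ≤ p ω) (hp1 : ∑ ω, p ω = 1) (f : Ω → α) :
    0 ≤ entropy p f := by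
  rw [entropy_eq_omega]
  rw [neg_nonneg]
  apply Finset.sum_nonpos
  intro ω _
  apply mul_nonpos_of_nonneg_of_nonpos (hp ω)
  exact Real.logb_nonpos one_lt_two (massFn_nonneg p hp f _) (massFn_le_one p hp hp1 f _)

lemma entropy_mono (hp : ∀ ω, 0 ≤ p ω) (f : Ω → α) (g : Ω → β) :
    entropy p g ≤ entropy p (fun ω => (f ω, g ω)) := by
  rw [entropy_eq_omega, entropy_eq_omega, neg_le_neg_iff]
  apply Finset.sum_le_sum
  intro ω _
  rcases eq_or_lt_of_le (hp ω) with h0 | h0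
  · rw [← h0]; simp
  · apply mul_le_mul_of_nonneg_left _ (hp ω)
    apply Real.logb_le_logb_of_le one_lt_two
    · exact lt_of_lt_of_le h0 (le_massFn p hp _ ω)
    · exact massFn_le_massFn p hp fun ω' h => congrArg Prod.snd h

end Basics

section Submod
open Finset Real
variable {Ω α β γ : Type*} [Fintype Ω] (p : Ω → ℝ)

lemma massFn_marg [Fintype α] (f : Ω → α) (h : Ω → γ) (c : γ) :
    ∑ a, massFn p (fun ω => (f ω, h ω)) (a, c) = massFn p h c := by
  classical
  simp only [massFn_def]
  have hfil : ∀ a : α, Finset.univ.filter (fun ω => (f ω, h ω) = (a, c))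
      = (Finset.univ.filter (fun ω => h ω = c)).filter (fun ω => f ω = a) := by
    intro a
    rw [Finset.filter_filter]
    apply Finset.filter_congr
    intro ω _
    simp only [Prod.mk.injEq]
    tauto
  simp only [hfil]
  exact Finset.sum_fiberwise (Finset.univ.filter (fun ω => h ω = c)) f (fun ω => p ω)

lemma entropy_submod [Fintype α] [Fintype β] [Fintype γ]
    (hp : ∀ ω, 0 ≤ p ω) (hp1 : ∑ ω, p ω = 1) (f : Ω → α) (g : Ω → β) (h : Ω → γ) :
    entropy p (fun ω => (f ω, g ω, h ω)) + entropy p h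
      ≤ entropy p (fun ω => (f ω, h ω)) + entropy p (fun ω => (g ω, h ω)) := by
  set m3 := massFn p (fun ω => (f ω, g ω, h ω)) with hm3def
  set mf := massFn p (fun ω => (f ω, h ω)) with hmfdef
  set mg := massFn p (fun ω => (g ω, h ω)) with hmgdef
  set mh := massFn p h with hmhdef
  set c : ℝ := (Real.log 2)⁻¹ with hcdef
  have hc : 0 < c := inv_pos.mpr (Real.log_pos one_lt_two)
  -- termwise bound
  have key : ∑ ω, (p ω * Real.logb 2 (mf (f ω, h ω)) + p ω * Real.logb 2 (mg (g ω, h ω))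
      - p ω * Real.logb 2 (m3 (f ω, g ω, h ω)) - p ω * Real.logb 2 (mh (h ω))) ≤ 0 := by
    have hterm : ∀ ω ∈ Finset.univ (α := Ω),
        p ω * Real.logb 2 (mf (f ω, h ω)) + p ω * Real.logb 2 (mg (g ω, h ω))
          - p ω * Real.logb 2 (m3 (f ω, g ω, h ω)) - p ω * Real.logb 2 (mh (h ω))
        ≤ (p ω * (mf (f ω, h ω) * mg (g ω, h ω) / (m3 (f ω, g ω, h ω) * mh (h ω))) - p ω) * c := by
      intro ω _
      rcases eq_or_lt_of_le (hp ω) with h0 | h0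
      · rw [← h0]; simp
      · have hmf : 0 < mf (f ω, h ω) := lt_of_lt_of_le h0 (le_massFn p hp _ ω)
        have hmg : 0 < mg (g ω, h ω) := lt_of_lt_of_le h0 (le_massFn p hp _ ω)
        have hm3 : 0 < m3 (f ω, g ω, h ω) := lt_of_lt_of_le h0 (le_massFn p hp _ ω)
        have hmh : 0 < mh (h ω) := lt_of_lt_of_le h0 (le_massFn p hp _ ω)
        have hR : 0 < mf (f ω, h ω) * mg (g ω, h ω) / (m3 (f ω, g ω, h ω) * mh (h ω)) := by
          positivity
        have hlogb : Real.logb 2 (mf (f ω, h ω)) + Real.logb 2 (mg (g ω, h ω))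
            - Real.logb 2 (m3 (f ω, g ω, h ω)) - Real.logb 2 (mh (h ω))
            = Real.logb 2 (mf (f ω, h ω) * mg (g ω, h ω) / (m3 (f ω, g ω, h ω) * mh (h ω))) := by
          rw [Real.logb_div (by positivity) (by positivity), Real.logb_mul hmf.ne' hmg.ne',
            Real.logb_mul hm3.ne' hmh.ne']
          ring
        have hlog : Real.logb 2 (mf (f ω, h ω) * mg (g ω, h ω) / (m3 (f ω, g ω, h ω) * mh (h ω)))
            ≤ (mf (f ω, h ω) * mg (g ω, h ω) / (m3 (f ω, g ω, h ω) * mh (h ω)) - 1) * c := by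
          rw [Real.logb, div_eq_mul_inv, ← hcdef]
          exact mul_le_mul_of_nonneg_right (Real.log_le_sub_one_of_pos hR) hc.le
        calc p ω * Real.logb 2 (mf (f ω, h ω)) + p ω * Real.logb 2 (mg (g ω, h ω))
              - p ω * Real.logb 2 (m3 (f ω, g ω, h ω)) - p ω * Real.logb 2 (mh (h ω))
            = p ω * (Real.logb 2 (mf (f ω, h ω)) + Real.logb 2 (mg (g ω, h ω))
              - Real.logb 2 (m3 (f ω, g ω, h ω)) - Real.logb 2 (mh (h ω))) := by ring
          _ = p ω * Real.logb 2 (mf (f ω, h ω) * mg (g ω, h ω)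
                / (m3 (f ω, g ω, h ω) * mh (h ω))) := by rw [hlogb]
          _ ≤ p ω * ((mf (f ω, h ω) * mg (g ω, h ω)
                / (m3 (f ω, g ω, h ω) * mh (h ω)) - 1) * c) :=
              mul_le_mul_of_nonneg_left hlog h0.le
          _ = (p ω * (mf (f ω, h ω) * mg (g ω, h ω)
                / (m3 (f ω, g ω, h ω) * mh (h ω))) - p ω) * c := by ring
    have hS : ∑ ω, p ω * (mf (f ω, h ω) * mg (g ω, h ω)
        / (m3 (f ω, g ω, h ω) * mh (h ω))) ≤ 1 := by
      letI := Classical.decEq α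
      letI := Classical.decEq β
      letI := Classical.decEq γ
      -- group by fibers of the triple
      have hA : ∑ ω, p ω * (mf (f ω, h ω) * mg (g ω, h ω)
          / (m3 (f ω, g ω, h ω) * mh (h ω)))
          = ∑ x : α × β × γ, m3 x * (mf (x.1, x.2.2) * mg (x.2.1, x.2.2)
              / (m3 x * mh x.2.2)) := by
        rw [← Finset.sum_fiberwise Finset.univ (fun ω => (f ω, g ω, h ω))
            (fun ω => p ω * (mf (f ω, h ω) * mg (g ω, h ω)
              / (m3 (f ω, g ω, h ω) * mh (h ω))))]
        apply Finset.sum_congr rfl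
        intro x _
        have : ∀ ω ∈ Finset.univ.filter (fun ω => (f ω, g ω, h ω) = x),
            p ω * (mf (f ω, h ω) * mg (g ω, h ω) / (m3 (f ω, g ω, h ω) * mh (h ω)))
            = p ω * (mf (x.1, x.2.2) * mg (x.2.1, x.2.2) / (m3 x * mh x.2.2)) := by
          intro ω hω
          simp only [Finset.mem_filter, Finset.mem_univ, true_and] at hω
          have h1 : f ω = x.1 := by rw [← hω]
          have h2 : g ω = x.2.1 := by rw [← hω]
          have h3 : h ω = x.2.2 := by rw [← hω]
          rw [← hω, h1, h2, h3]
        rw [Finset.sum_congr rfl this, ← Finset.sum_mul, hm3def, massFn_def]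
      have hB : ∀ x : α × β × γ, m3 x * (mf (x.1, x.2.2) * mg (x.2.1, x.2.2)
          / (m3 x * mh x.2.2)) ≤ mf (x.1, x.2.2) * mg (x.2.1, x.2.2) / mh x.2.2 := by
        intro x
        by_cases hz : m3 x = 0
        · rw [hz, zero_mul]
          apply div_nonneg (mul_nonneg (massFn_nonneg p hp _ _) (massFn_nonneg p hp _ _))
            (massFn_nonneg p hp _ _)
        · have hz' : 0 < m3 x := lt_of_le_of_ne (massFn_nonneg p hp _ x) (Ne.symm hz)
          have hmh : 0 < mh x.2.2 := by
            apply lt_of_lt_of_le hz'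
            exact massFn_le_massFn p hp (fun ω hω => by rw [show h ω = x.2.2 from by rw [← hω]])
          rw [show m3 x * (mf (x.1, x.2.2) * mg (x.2.1, x.2.2) / (m3 x * mh x.2.2))
              = mf (x.1, x.2.2) * mg (x.2.1, x.2.2) / mh x.2.2 from by
            field_simp [hz, hmh.ne']]
      have hC : ∑ x : α × β × γ, mf (x.1, x.2.2) * mg (x.2.1, x.2.2) / mh x.2.2 ≤ 1 := by
        have e1 : ∑ x : α × β × γ, mf (x.1, x.2.2) * mg (x.2.1, x.2.2) / mh x.2.2
            = ∑ y : β × γ, ∑ a, mf (a, y.2) * (mg y / mh y.2) := by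
          rw [Fintype.sum_prod_type]
          rw [Finset.sum_comm]
          apply Finset.sum_congr rfl
          intro y _
          apply Finset.sum_congr rfl
          intro a _
          rw [mul_div_assoc]
        rw [e1]
        have e2 : ∀ y : β × γ, ∑ a, mf (a, y.2) * (mg y / mh y.2)
            = mh y.2 * (mg y / mh y.2) := by
          intro y
          rw [← Finset.sum_mul, hmfdef, massFn_marg p f h y.2, ← hmhdef]
        have e3 : ∀ y : β × γ, mh y.2 * (mg y / mh y.2) ≤ mg y := by
          intro y
          by_cases hz : mh y.2 = 0
          · rw [hz, zero_mul]
            exact massFn_nonneg p hp _ _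
          · rw [mul_div_cancel₀ _ hz]
        calc ∑ y : β × γ, ∑ a, mf (a, y.2) * (mg y / mh y.2)
            = ∑ y : β × γ, mh y.2 * (mg y / mh y.2) := Finset.sum_congr rfl fun y _ => e2 y
          _ ≤ ∑ y : β × γ, mg y := Finset.sum_le_sum fun y _ => e3 y
          _ = 1 := by rw [hmgdef, sum_massFn, hp1]
      calc ∑ ω, p ω * (mf (f ω, h ω) * mg (g ω, h ω) / (m3 (f ω, g ω, h ω) * mh (h ω)))
          = ∑ x : α × β × γ, m3 x * (mf (x.1, x.2.2) * mg (x.2.1, x.2.2) / (m3 x * mh x.2.2)) := hA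
        _ ≤ ∑ x : α × β × γ, mf (x.1, x.2.2) * mg (x.2.1, x.2.2) / mh x.2.2 :=
            Finset.sum_le_sum fun x _ => hB x
        _ ≤ 1 := hC
    calc ∑ ω, (p ω * Real.logb 2 (mf (f ω, h ω)) + p ω * Real.logb 2 (mg (g ω, h ω))
          - p ω * Real.logb 2 (m3 (f ω, g ω, h ω)) - p ω * Real.logb 2 (mh (h ω)))
        ≤ ∑ ω, (p ω * (mf (f ω, h ω) * mg (g ω, h ω)
            / (m3 (f ω, g ω, h ω) * mh (h ω))) - p ω) * c := Finset.sum_le_sum hterm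
      _ = (∑ ω, p ω * (mf (f ω, h ω) * mg (g ω, h ω)
            / (m3 (f ω, g ω, h ω) * mh (h ω))) - ∑ ω, p ω) * c := by
          rw [← Finset.sum_mul, Finset.sum_sub_distrib]
      _ ≤ 0 := mul_nonpos_of_nonpos_of_nonneg (by rw [hp1]; linarith [hS]) hc.le
  rw [entropy_eq_omega, entropy_eq_omega, entropy_eq_omega, entropy_eq_omega]
  simp only [Finset.sum_sub_distrib, Finset.sum_add_distrib] at key
  linarith [key]

end Submod

section More
open Finset Real
variable {Ω α β γ : Type*} [Fintype Ω] (p : Ω → ℝ)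

lemma entropy_unit (hp1 : ∑ ω, p ω = 1) : entropy p (fun _ : Ω => ()) = 0 := by
  rw [entropy_eq_omega]
  have h1 : massFn p (fun _ : Ω => ()) () = 1 := by
    rw [massFn_def]
    simpa using hp1
  have : ∀ ω : Ω, p ω * Real.logb 2 (massFn p (fun _ : Ω => ()) ()) = 0 := by
    intro ω
    rw [h1]
    simp
  simp [this]

lemma entropy_subadd [Fintype α] [Fintype β]
    (hp : ∀ ω, 0 ≤ p ω) (hp1 : ∑ ω, p ω = 1) (f : Ω → α) (g : Ω → β) :
    entropy p (fun ω => (f ω, g ω)) ≤ entropy p f + entropy p g := by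
  have h := entropy_submod p hp hp1 f g (fun _ : Ω => ())
  have e1 : entropy p (fun ω => (f ω, g ω, ())) = entropy p (fun ω => (f ω, g ω)) :=
    entropy_congr p (by intro ω ω'; simp [Prod.ext_iff])
  have e2 : entropy p (fun ω => (f ω, ())) = entropy p f :=
    entropy_congr p (by intro ω ω'; simp [Prod.ext_iff])
  have e3 : entropy p (fun ω => (g ω, ())) = entropy p g :=
    entropy_congr p (by intro ω ω'; simp [Prod.ext_iff])
  have e4 := entropy_unit p hp1
  linarith

lemma massFn_comp [Fintype α] [DecidableEq α] [DecidableEq β] (f : Ω → α) (φ : α → β) (y : β) :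
    massFn p (fun ω => φ (f ω)) y = ∑ x ∈ Finset.univ.filter (fun x => φ x = y), massFn p f x := by
  simp only [massFn_def]
  have h1 : ∀ x : α, (if φ x = y then ∑ ω ∈ Finset.univ.filter (fun ω => f ω = x), p ω else 0)
      = ∑ ω ∈ Finset.univ.filter (fun ω => f ω = x), (if φ (f ω) = y then p ω else 0) := by
    intro x
    by_cases h : φ x = y
    · rw [if_pos h]
      apply Finset.sum_congr rfl
      intro ω hω
      simp only [Finset.mem_filter, Finset.mem_univ, true_and] at hω
      rw [hω, if_pos h]
    · rw [if_neg h]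
      symm
      apply Finset.sum_eq_zero
      intro ω hω
      simp only [Finset.mem_filter, Finset.mem_univ, true_and] at hω
      rw [hω, if_neg h]
  calc ∑ ω ∈ Finset.univ.filter (fun ω => φ (f ω) = y), p ω
      = ∑ ω, (if φ (f ω) = y then p ω else 0) := Finset.sum_filter _ _
    _ = ∑ x : α, ∑ ω ∈ Finset.univ.filter (fun ω => f ω = x), (if φ (f ω) = y then p ω else 0) :=
        (Finset.sum_fiberwise _ _ _).symm
    _ = ∑ x : α, (if φ x = y then ∑ ω ∈ Finset.univ.filter (fun ω => f ω = x), p ω else 0) := by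
        rw [Finset.sum_congr rfl (fun x _ => (h1 x).symm)]
    _ = ∑ x ∈ Finset.univ.filter (fun x => φ x = y),
          ∑ ω ∈ Finset.univ.filter (fun ω => f ω = x), p ω := (Finset.sum_filter _ _).symm

end More

section ZY
open Finset Real
variable {Ω α β γ δ : Type*} [Fintype Ω] [Fintype α] [Fintype β] [Fintype γ] [Fintype δ]

lemma massFn_fst {Ω₁ Ω₂ κ : Type*} [Fintype Ω₁] [Fintype Ω₂] (q : Ω₁ × Ω₂ → ℝ) (p : Ω₁ → ℝ)
    (hmar : ∀ ω₁, ∑ ω₂, q (ω₁, ω₂) = p ω₁) (u : Ω₁ → κ) (y : κ) :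
    massFn q (fun z => u z.1) y = massFn p u y := by
  classical
  rw [massFn_def, massFn_def, Finset.sum_filter, Finset.sum_filter,
    Fintype.sum_prod_type]
  apply Finset.sum_congr rfl
  intro ω₁ _
  by_cases h : u ω₁ = y
  · simp only [h, if_true]
    exact hmar ω₁
  · simp only [h, if_false, Finset.sum_const_zero]

theorem zy_ineq (p : Ω → ℝ) (hp : ∀ ω, 0 ≤ p ω) (hp1 : ∑ ω, p ω = 1)
    (A : Ω → α) (B : Ω → β) (C : Ω → γ) (D : Ω → δ) :
    2 * (entropy p C + entropy p D - entropy p (fun ω => (C ω, D ω)))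
      ≤ 3 * (entropy p (fun ω => (A ω, C ω)) + entropy p (fun ω => (A ω, D ω))
            - entropy p (fun ω => (A ω, C ω, D ω)) - entropy p A)
        + (entropy p (fun ω => (B ω, C ω)) + entropy p (fun ω => (B ω, D ω))
            - entropy p (fun ω => (B ω, C ω, D ω)) - entropy p B)
        + (entropy p A + entropy p B - entropy p (fun ω => (A ω, B ω)))
        + (entropy p A + entropy p (fun ω => (C ω, D ω))
            - entropy p (fun ω => (A ω, C ω, D ω))) := by
  classical
  set mCD := massFn p (fun ω => (C ω, D ω)) with hmCD
  set q : Ω × Ω → ℝ := fun z =>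
    p z.1 * (if C z.2 = C z.1 ∧ D z.2 = D z.1
      then p z.2 * (mCD (C z.1, D z.1))⁻¹ else 0) with hqdef
  have hq : ∀ z, 0 ≤ q z := by
    intro z
    apply mul_nonneg (hp _)
    split
    · exact mul_nonneg (hp _) (inv_nonneg.mpr (massFn_nonneg p hp _ _))
    · exact le_refl 0
  have hfil0 : ∀ c d, Finset.univ.filter (fun ω => C ω = c ∧ D ω = d)
      = Finset.univ.filter (fun ω => (C ω, D ω) = (c, d)) := by
    intro c d
    apply Finset.filter_congr
    intro ω _
    simp [Prod.ext_iff]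
  have hmar : ∀ ω₁, ∑ ω₂, q (ω₁, ω₂) = p ω₁ := by
    intro ω₁
    have step : ∑ ω₂, q (ω₁, ω₂)
        = p ω₁ * (mCD (C ω₁, D ω₁) * (mCD (C ω₁, D ω₁))⁻¹) := by
      simp only [hqdef]
      rw [← Finset.mul_sum]
      congr 1
      rw [show (∑ ω₂, if C ω₂ = C ω₁ ∧ D ω₂ = D ω₁
            then p ω₂ * (mCD (C ω₁, D ω₁))⁻¹ else 0)
          = ∑ ω₂ ∈ Finset.univ.filter (fun ω₂ => C ω₂ = C ω₁ ∧ D ω₂ = D ω₁),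
            p ω₂ * (mCD (C ω₁, D ω₁))⁻¹ from (Finset.sum_filter _ _).symm]
      rw [← Finset.sum_mul, hfil0, hmCD, massFn_def]
    rw [step]
    by_cases hm : mCD (C ω₁, D ω₁) = 0
    · have hple : p ω₁ ≤ mCD (C ω₁, D ω₁) := le_massFn p hp (fun ω => (C ω, D ω)) ω₁
      have : p ω₁ = 0 := le_antisymm (hm ▸ hple) (hp ω₁)
      rw [this, hm]
      ring
    · rw [mul_inv_cancel₀ hm, mul_one]
  have hq1 : ∑ z, q z = 1 := by
    rw [Fintype.sum_prod_type]
    rw [Finset.sum_congr rfl (fun ω₁ _ => hmar ω₁)]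
    exact hp1
  have hsnd : ∀ (a : α) (c : γ) (d : δ),
      massFn q (fun z => (A z.2, C z.1, D z.1)) (a, c, d)
        = massFn p (fun ω => (A ω, C ω, D ω)) (a, c, d) := by
    intro a c d
    rw [massFn_def, Finset.sum_filter, Fintype.sum_prod_type]
    have inner : ∀ ω₁, (∑ ω₂, if (A ω₂, C ω₁, D ω₁) = (a, c, d) then q (ω₁, ω₂) else 0)
        = (if (C ω₁, D ω₁) = (c, d) then
            p ω₁ * (massFn p (fun ω => (A ω, C ω, D ω)) (a, c, d) * (mCD (c, d))⁻¹) else 0) := by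
      intro ω₁
      by_cases hcd : (C ω₁, D ω₁) = (c, d)
      · rw [Prod.mk.injEq] at hcd
        obtain ⟨hc, hd⟩ := hcd
        rw [if_pos (by rw [hc, hd])]
        have hterm : ∀ ω₂, (if (A ω₂, C ω₁, D ω₁) = (a, c, d) then q (ω₁, ω₂) else 0)
            = p ω₁ * (if (A ω₂, C ω₂, D ω₂) = (a, c, d)
                then p ω₂ * (mCD (c, d))⁻¹ else 0) := by
          intro ω₂
          simp only [hqdef, hc, hd]
          by_cases h1 : A ω₂ = a <;> by_cases h2 : C ω₂ = c <;> by_cases h3 : D ω₂ = d <;>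
            simp [h1, h2, h3, Prod.mk.injEq]
        rw [Finset.sum_congr rfl fun ω₂ _ => hterm ω₂, ← Finset.mul_sum]
        congr 1
        rw [show (∑ ω₂, if (A ω₂, C ω₂, D ω₂) = (a, c, d) then p ω₂ * (mCD (c, d))⁻¹ else 0)
            = ∑ ω₂ ∈ Finset.univ.filter (fun ω₂ => (A ω₂, C ω₂, D ω₂) = (a, c, d)),
              p ω₂ * (mCD (c, d))⁻¹ from (Finset.sum_filter _ _).symm]
        rw [← Finset.sum_mul, massFn_def]
      · rw [if_neg hcd]
        apply Finset.sum_eq_zero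
        intro ω₂ _
        rw [if_neg]
        intro hEq
        rw [Prod.mk.injEq] at hEq
        exact hcd hEq.2
    rw [Finset.sum_congr rfl fun ω₁ _ => inner ω₁]
    rw [show (∑ ω₁, if (C ω₁, D ω₁) = (c, d) then
          p ω₁ * (massFn p (fun ω => (A ω, C ω, D ω)) (a, c, d) * (mCD (c, d))⁻¹) else 0)
        = ∑ ω₁ ∈ Finset.univ.filter (fun ω₁ => (C ω₁, D ω₁) = (c, d)),
          p ω₁ * (massFn p (fun ω => (A ω, C ω, D ω)) (a, c, d) * (mCD (c, d))⁻¹)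
        from (Finset.sum_filter _ _).symm]
    rw [← Finset.sum_mul, ← massFn_def]
    by_cases hm : mCD (c, d) = 0
    · have hle : massFn p (fun ω => (A ω, C ω, D ω)) (a, c, d) ≤ mCD (c, d) :=
        massFn_le_massFn p hp (fun ω hω => congrArg Prod.snd hω)
      have h0 : massFn p (fun ω => (A ω, C ω, D ω)) (a, c, d) = 0 :=
        le_antisymm (hm ▸ hle) (massFn_nonneg p hp _ _)
      rw [hmCD] at hm ⊢
      rw [hm, h0]
      ring
    · rw [show mCD (c, d) * (massFn p (fun ω => (A ω, C ω, D ω)) (a, c, d) * (mCD (c, d))⁻¹)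
          = massFn p (fun ω => (A ω, C ω, D ω)) (a, c, d) from by field_simp]
  have hfull : ∀ (a' a : α) (b : β) (c : γ) (d : δ),
      massFn q (fun z => (A z.2, A z.1, B z.1, C z.1, D z.1)) (a', a, b, c, d)
        = massFn p (fun ω => (A ω, B ω, C ω, D ω)) (a, b, c, d)
          * (massFn p (fun ω => (A ω, C ω, D ω)) (a', c, d) * (mCD (c, d))⁻¹) := by
    intro a' a b c d
    rw [massFn_def, Finset.sum_filter, Fintype.sum_prod_type]
    have inner : ∀ ω₁,
        (∑ ω₂, if (A ω₂, A ω₁, B ω₁, C ω₁, D ω₁) = (a', a, b, c, d) then q (ω₁, ω₂) else 0)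
        = (if (A ω₁, B ω₁, C ω₁, D ω₁) = (a, b, c, d) then
            p ω₁ * (massFn p (fun ω => (A ω, C ω, D ω)) (a', c, d) * (mCD (c, d))⁻¹) else 0) := by
      intro ω₁
      by_cases habcd : (A ω₁, B ω₁, C ω₁, D ω₁) = (a, b, c, d)
      · rw [Prod.mk.injEq, Prod.mk.injEq, Prod.mk.injEq] at habcd
        obtain ⟨ha, hb, hc, hd⟩ := habcd
        rw [if_pos (by rw [ha, hb, hc, hd])]
        have hterm : ∀ ω₂,
            (if (A ω₂, A ω₁, B ω₁, C ω₁, D ω₁) = (a', a, b, c, d) then q (ω₁, ω₂) else 0)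
            = p ω₁ * (if (A ω₂, C ω₂, D ω₂) = (a', c, d)
                then p ω₂ * (mCD (c, d))⁻¹ else 0) := by
          intro ω₂
          simp only [hqdef, ha, hb, hc, hd]
          by_cases h1 : A ω₂ = a' <;> by_cases h2 : C ω₂ = c <;> by_cases h3 : D ω₂ = d <;>
            simp [h1, h2, h3, Prod.mk.injEq]
        rw [Finset.sum_congr rfl fun ω₂ _ => hterm ω₂, ← Finset.mul_sum]
        congr 1
        rw [show (∑ ω₂, if (A ω₂, C ω₂, D ω₂) = (a', c, d) then p ω₂ * (mCD (c, d))⁻¹ else 0)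
            = ∑ ω₂ ∈ Finset.univ.filter (fun ω₂ => (A ω₂, C ω₂, D ω₂) = (a', c, d)),
              p ω₂ * (mCD (c, d))⁻¹ from (Finset.sum_filter _ _).symm]
        rw [← Finset.sum_mul, massFn_def]
      · rw [if_neg habcd]
        apply Finset.sum_eq_zero
        intro ω₂ _
        rw [if_neg]
        intro hEq
        exact habcd (congrArg Prod.snd hEq)
    rw [Finset.sum_congr rfl fun ω₁ _ => inner ω₁]
    rw [show (∑ ω₁, if (A ω₁, B ω₁, C ω₁, D ω₁) = (a, b, c, d) then
          p ω₁ * (massFn p (fun ω => (A ω, C ω, D ω)) (a', c, d) * (mCD (c, d))⁻¹) else 0)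
        = ∑ ω₁ ∈ Finset.univ.filter (fun ω₁ => (A ω₁, B ω₁, C ω₁, D ω₁) = (a, b, c, d)),
          p ω₁ * (massFn p (fun ω => (A ω, C ω, D ω)) (a', c, d) * (mCD (c, d))⁻¹)
        from (Finset.sum_filter _ _).symm]
    rw [← Finset.sum_mul, ← massFn_def]
  have hci : entropy q (fun z => (A z.2, A z.1, B z.1, C z.1, D z.1))
        + entropy q (fun z => (C z.1, D z.1))
      = entropy q (fun z => (A z.1, B z.1, C z.1, D z.1))
        + entropy q (fun z => (A z.2, C z.1, D z.1)) := by
    rw [entropy_eq_omega, entropy_eq_omega, entropy_eq_omega, entropy_eq_omega]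
    have key : ∀ z : Ω × Ω,
        q z * Real.logb 2 (massFn q (fun z => (A z.2, A z.1, B z.1, C z.1, D z.1))
            (A z.2, A z.1, B z.1, C z.1, D z.1))
          + q z * Real.logb 2 (massFn q (fun z => (C z.1, D z.1)) (C z.1, D z.1))
        = q z * Real.logb 2 (massFn q (fun z => (A z.1, B z.1, C z.1, D z.1))
            (A z.1, B z.1, C z.1, D z.1))
          + q z * Real.logb 2 (massFn q (fun z => (A z.2, C z.1, D z.1)) (A z.2, C z.1, D z.1)) := by
      intro z
      by_cases hz : q z = 0
      · rw [hz]; ring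
      · have hpz1 : p z.1 ≠ 0 := by
          intro h
          exact hz (by simp [hqdef, h])
        have hcond : C z.2 = C z.1 ∧ D z.2 = D z.1 := by
          by_contra h
          exact hz (by simp [hqdef, if_neg h])
        obtain ⟨hC2, hD2⟩ := hcond
        have hpz2 : p z.2 ≠ 0 := by
          intro h
          exact hz (by simp [hqdef, h])
        have hmne : mCD (C z.1, D z.1) ≠ 0 := by
          intro h
          exact hz (by simp [hqdef, h])
        have hX : (0:ℝ) < massFn p (fun ω => (A ω, B ω, C ω, D ω)) (A z.1, B z.1, C z.1, D z.1) :=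
          lt_of_lt_of_le (lt_of_le_of_ne (hp z.1) (Ne.symm hpz1))
            (le_massFn p hp (fun ω => (A ω, B ω, C ω, D ω)) z.1)
        have hY : (0:ℝ) < massFn p (fun ω => (A ω, C ω, D ω)) (A z.2, C z.1, D z.1) := by
          rw [← hC2, ← hD2]
          exact lt_of_lt_of_le (lt_of_le_of_ne (hp z.2) (Ne.symm hpz2))
            (le_massFn p hp (fun ω => (A ω, C ω, D ω)) z.2)
        have hZ : (0:ℝ) < mCD (C z.1, D z.1) :=
          lt_of_le_of_ne (by rw [hmCD]; exact massFn_nonneg p hp _ _) (Ne.symm hmne)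
        rw [hfull (A z.2) (A z.1) (B z.1) (C z.1) (D z.1), hsnd (A z.2) (C z.1) (D z.1),
          massFn_fst q p hmar (fun ω => (C ω, D ω)) (C z.1, D z.1),
          massFn_fst q p hmar (fun ω => (A ω, B ω, C ω, D ω)) (A z.1, B z.1, C z.1, D z.1), ← hmCD]
        rw [Real.logb_mul hX.ne' (mul_ne_zero hY.ne' (inv_ne_zero hmne)),
          Real.logb_mul hY.ne' (inv_ne_zero hmne), Real.logb_inv]
        ring
    have hsum : (∑ z, q z * Real.logb 2 (massFn q (fun z => (A z.2, A z.1, B z.1, C z.1, D z.1))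
          ((fun z => (A z.2, A z.1, B z.1, C z.1, D z.1)) z)))
        + (∑ z, q z * Real.logb 2 (massFn q (fun z => (C z.1, D z.1)) ((fun z => (C z.1, D z.1)) z)))
        = (∑ z, q z * Real.logb 2 (massFn q (fun z => (A z.1, B z.1, C z.1, D z.1))
            ((fun z => (A z.1, B z.1, C z.1, D z.1)) z)))
          + (∑ z, q z * Real.logb 2 (massFn q (fun z => (A z.2, C z.1, D z.1))
            ((fun z => (A z.2, C z.1, D z.1)) z))) := by
      rw [← Finset.sum_add_distrib, ← Finset.sum_add_distrib]
      exact Finset.sum_congr rfl fun z _ => key z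
    linarith [hsum]
  have cv0 : entropy q (fun z => A z.1) = entropy p A :=
    entropy_eq_of_massFn q (fun y => massFn_fst q p hmar A y)
  have cv1 : entropy q (fun z => B z.1) = entropy p B :=
    entropy_eq_of_massFn q (fun y => massFn_fst q p hmar B y)
  have cv2 : entropy q (fun z => C z.1) = entropy p C :=
    entropy_eq_of_massFn q (fun y => massFn_fst q p hmar C y)
  have cv3 : entropy q (fun z => D z.1) = entropy p D :=
    entropy_eq_of_massFn q (fun y => massFn_fst q p hmar D y)
  have cv4 : entropy q (fun z => (A z.1, B z.1)) = entropy p (fun ω => (A ω, B ω)) :=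
    entropy_eq_of_massFn q (fun y => massFn_fst q p hmar (fun ω => (A ω, B ω)) y)
  have cv5 : entropy q (fun z => (A z.1, C z.1)) = entropy p (fun ω => (A ω, C ω)) :=
    entropy_eq_of_massFn q (fun y => massFn_fst q p hmar (fun ω => (A ω, C ω)) y)
  have cv6 : entropy q (fun z => (A z.1, D z.1)) = entropy p (fun ω => (A ω, D ω)) :=
    entropy_eq_of_massFn q (fun y => massFn_fst q p hmar (fun ω => (A ω, D ω)) y)
  have cv7 : entropy q (fun z => (B z.1, C z.1)) = entropy p (fun ω => (B ω, C ω)) :=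
    entropy_eq_of_massFn q (fun y => massFn_fst q p hmar (fun ω => (B ω, C ω)) y)
  have cv8 : entropy q (fun z => (B z.1, D z.1)) = entropy p (fun ω => (B ω, D ω)) :=
    entropy_eq_of_massFn q (fun y => massFn_fst q p hmar (fun ω => (B ω, D ω)) y)
  have cv9 : entropy q (fun z => (C z.1, D z.1)) = entropy p (fun ω => (C ω, D ω)) :=
    entropy_eq_of_massFn q (fun y => massFn_fst q p hmar (fun ω => (C ω, D ω)) y)
  have cv10 : entropy q (fun z => (A z.1, C z.1, D z.1)) = entropy p (fun ω => (A ω, C ω, D ω)) :=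
    entropy_eq_of_massFn q (fun y => massFn_fst q p hmar (fun ω => (A ω, C ω, D ω)) y)
  have cv11 : entropy q (fun z => (B z.1, C z.1, D z.1)) = entropy p (fun ω => (B ω, C ω, D ω)) :=
    entropy_eq_of_massFn q (fun y => massFn_fst q p hmar (fun ω => (B ω, C ω, D ω)) y)
  have dECD : entropy q (fun z => (A z.2, C z.1, D z.1))
      = entropy p (fun ω => (A ω, C ω, D ω)) :=
    entropy_eq_of_massFn q (fun y => hsnd y.1 y.2.1 y.2.2)
  have dEC : entropy q (fun z => (A z.2, C z.1)) = entropy p (fun ω => (A ω, C ω)) := by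
    apply entropy_eq_of_massFn
    intro y
    have h1 : massFn q (fun z => (A z.2, C z.1)) y
        = ∑ x ∈ Finset.univ.filter (fun x : α × γ × δ => (fun x => (x.1, x.2.1)) x = y),
          massFn q (fun z => (A z.2, C z.1, D z.1)) x :=
      massFn_comp q (fun z => (A z.2, C z.1, D z.1)) (fun x => (x.1, x.2.1)) y
    have h2 : massFn p (fun ω => (A ω, C ω)) y
        = ∑ x ∈ Finset.univ.filter (fun x : α × γ × δ => (fun x => (x.1, x.2.1)) x = y),
          massFn p (fun ω => (A ω, C ω, D ω)) x :=
      massFn_comp p (fun ω => (A ω, C ω, D ω)) (fun x => (x.1, x.2.1)) y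
    rw [h1, h2]
    exact Finset.sum_congr rfl fun x _ => hsnd x.1 x.2.1 x.2.2
  have dED : entropy q (fun z => (A z.2, D z.1)) = entropy p (fun ω => (A ω, D ω)) := by
    apply entropy_eq_of_massFn
    intro y
    have h1 : massFn q (fun z => (A z.2, D z.1)) y
        = ∑ x ∈ Finset.univ.filter (fun x : α × γ × δ => (fun x => (x.1, x.2.2)) x = y),
          massFn q (fun z => (A z.2, C z.1, D z.1)) x :=
      massFn_comp q (fun z => (A z.2, C z.1, D z.1)) (fun x => (x.1, x.2.2)) y
    have h2 : massFn p (fun ω => (A ω, D ω)) y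
        = ∑ x ∈ Finset.univ.filter (fun x : α × γ × δ => (fun x => (x.1, x.2.2)) x = y),
          massFn p (fun ω => (A ω, C ω, D ω)) x :=
      massFn_comp p (fun ω => (A ω, C ω, D ω)) (fun x => (x.1, x.2.2)) y
    rw [h1, h2]
    exact Finset.sum_congr rfl fun x _ => hsnd x.1 x.2.1 x.2.2
  have dE : entropy q (fun z => A z.2) = entropy p A := by
    apply entropy_eq_of_massFn
    intro y
    have h1 : massFn q (fun z => A z.2) y
        = ∑ x ∈ Finset.univ.filter (fun x : α × γ × δ => (fun x => x.1) x = y),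
          massFn q (fun z => (A z.2, C z.1, D z.1)) x :=
      massFn_comp q (fun z => (A z.2, C z.1, D z.1)) (fun x => x.1) y
    have h2 : massFn p A y
        = ∑ x ∈ Finset.univ.filter (fun x : α × γ × δ => (fun x => x.1) x = y),
          massFn p (fun ω => (A ω, C ω, D ω)) x :=
      massFn_comp p (fun ω => (A ω, C ω, D ω)) (fun x => x.1) y
    rw [h1, h2]
    exact Finset.sum_congr rfl fun x _ => hsnd x.1 x.2.1 x.2.2
  have s1 : entropy q (fun z => (A z.2, A z.1, C z.1)) + entropy q (fun z => C z.1) ≤ entropy q (fun z => (A z.2, C z.1)) + entropy q (fun z => (A z.1, C z.1)) :=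
    entropy_submod q hq hq1 (fun z => A z.2) (fun z => A z.1) (fun z => C z.1)
  have s2 : entropy q (fun z => (A z.2, A z.1, D z.1)) + entropy q (fun z => D z.1) ≤ entropy q (fun z => (A z.2, D z.1)) + entropy q (fun z => (A z.1, D z.1)) :=
    entropy_submod q hq hq1 (fun z => A z.2) (fun z => A z.1) (fun z => D z.1)
  have s3 : entropy q (fun z => (A z.2, A z.1, B z.1, C z.1, D z.1)) + entropy q (fun z => (B z.1, C z.1, D z.1)) ≤ entropy q (fun z => (A z.2, B z.1, C z.1, D z.1)) + entropy q (fun z => (A z.1, B z.1, C z.1, D z.1)) :=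
    entropy_submod q hq hq1 (fun z => A z.2) (fun z => A z.1) (fun z => (B z.1, C z.1, D z.1))
  have s4 : entropy q (fun z => (A z.2, B z.1, C z.1)) + entropy q (fun z => C z.1) ≤ entropy q (fun z => (A z.2, C z.1)) + entropy q (fun z => (B z.1, C z.1)) :=
    entropy_submod q hq hq1 (fun z => A z.2) (fun z => B z.1) (fun z => C z.1)
  have s5 : entropy q (fun z => (A z.2, B z.1, D z.1)) + entropy q (fun z => D z.1) ≤ entropy q (fun z => (A z.2, D z.1)) + entropy q (fun z => (B z.1, D z.1)) :=
    entropy_submod q hq hq1 (fun z => A z.2) (fun z => B z.1) (fun z => D z.1)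
  have s6 : entropy q (fun z => (A z.2, B z.1, A z.1, C z.1, D z.1)) + entropy q (fun z => (A z.1, C z.1, D z.1)) ≤ entropy q (fun z => (A z.2, A z.1, C z.1, D z.1)) + entropy q (fun z => (B z.1, A z.1, C z.1, D z.1)) :=
    entropy_submod q hq hq1 (fun z => A z.2) (fun z => B z.1) (fun z => (A z.1, C z.1, D z.1))
  have s7 : entropy q (fun z => (A z.2, C z.1, A z.1, B z.1, D z.1)) + entropy q (fun z => (A z.1, B z.1, D z.1)) ≤ entropy q (fun z => (A z.2, A z.1, B z.1, D z.1)) + entropy q (fun z => (C z.1, A z.1, B z.1, D z.1)) :=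
    entropy_submod q hq hq1 (fun z => A z.2) (fun z => C z.1) (fun z => (A z.1, B z.1, D z.1))
  have s8 : entropy q (fun z => (A z.2, D z.1, A z.1, B z.1)) + entropy q (fun z => (A z.1, B z.1)) ≤ entropy q (fun z => (A z.2, A z.1, B z.1)) + entropy q (fun z => (D z.1, A z.1, B z.1)) :=
    entropy_submod q hq hq1 (fun z => A z.2) (fun z => D z.1) (fun z => (A z.1, B z.1))
  have s9 : entropy q (fun z => (A z.1, B z.1, A z.2)) + entropy q (fun z => A z.2) ≤ entropy q (fun z => (A z.1, A z.2)) + entropy q (fun z => (B z.1, A z.2)) :=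
    entropy_submod q hq hq1 (fun z => A z.1) (fun z => B z.1) (fun z => A z.2)
  have s10 : entropy q (fun z => (C z.1, D z.1, A z.2, A z.1)) + entropy q (fun z => (A z.2, A z.1)) ≤ entropy q (fun z => (C z.1, A z.2, A z.1)) + entropy q (fun z => (D z.1, A z.2, A z.1)) :=
    entropy_submod q hq hq1 (fun z => C z.1) (fun z => D z.1) (fun z => (A z.2, A z.1))
  have s11 : entropy q (fun z => (C z.1, D z.1, A z.2, B z.1)) + entropy q (fun z => (A z.2, B z.1)) ≤ entropy q (fun z => (C z.1, A z.2, B z.1)) + entropy q (fun z => (D z.1, A z.2, B z.1)) :=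
    entropy_submod q hq hq1 (fun z => C z.1) (fun z => D z.1) (fun z => (A z.2, B z.1))
  have g1 : entropy q (fun z => (A z.2, B z.1, A z.1, C z.1, D z.1)) = entropy q (fun z => (A z.2, A z.1, B z.1, C z.1, D z.1)) :=
    entropy_congr q (by intro z z'; simp only [Prod.mk.injEq]; tauto)
  have g2 : entropy q (fun z => (B z.1, A z.1, C z.1, D z.1)) = entropy q (fun z => (A z.1, B z.1, C z.1, D z.1)) :=
    entropy_congr q (by intro z z'; simp only [Prod.mk.injEq]; tauto)
  have g3 : entropy q (fun z => (A z.2, C z.1, A z.1, B z.1, D z.1)) = entropy q (fun z => (A z.2, A z.1, B z.1, C z.1, D z.1)) :=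
    entropy_congr q (by intro z z'; simp only [Prod.mk.injEq]; tauto)
  have g4 : entropy q (fun z => (C z.1, A z.1, B z.1, D z.1)) = entropy q (fun z => (A z.1, B z.1, C z.1, D z.1)) :=
    entropy_congr q (by intro z z'; simp only [Prod.mk.injEq]; tauto)
  have g5 : entropy q (fun z => (A z.2, D z.1, A z.1, B z.1)) = entropy q (fun z => (A z.2, A z.1, B z.1, D z.1)) :=
    entropy_congr q (by intro z z'; simp only [Prod.mk.injEq]; tauto)
  have g6 : entropy q (fun z => (D z.1, A z.1, B z.1)) = entropy q (fun z => (A z.1, B z.1, D z.1)) :=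
    entropy_congr q (by intro z z'; simp only [Prod.mk.injEq]; tauto)
  have g7 : entropy q (fun z => (A z.1, B z.1, A z.2)) = entropy q (fun z => (A z.2, A z.1, B z.1)) :=
    entropy_congr q (by intro z z'; simp only [Prod.mk.injEq]; tauto)
  have g8 : entropy q (fun z => (A z.1, A z.2)) = entropy q (fun z => (A z.2, A z.1)) :=
    entropy_congr q (by intro z z'; simp only [Prod.mk.injEq]; tauto)
  have g9 : entropy q (fun z => (B z.1, A z.2)) = entropy q (fun z => (A z.2, B z.1)) :=
    entropy_congr q (by intro z z'; simp only [Prod.mk.injEq]; tauto)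
  have g10 : entropy q (fun z => (C z.1, D z.1, A z.2, A z.1)) = entropy q (fun z => (A z.2, A z.1, C z.1, D z.1)) :=
    entropy_congr q (by intro z z'; simp only [Prod.mk.injEq]; tauto)
  have g11 : entropy q (fun z => (C z.1, A z.2, A z.1)) = entropy q (fun z => (A z.2, A z.1, C z.1)) :=
    entropy_congr q (by intro z z'; simp only [Prod.mk.injEq]; tauto)
  have g12 : entropy q (fun z => (D z.1, A z.2, A z.1)) = entropy q (fun z => (A z.2, A z.1, D z.1)) :=
    entropy_congr q (by intro z z'; simp only [Prod.mk.injEq]; tauto)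
  have g13 : entropy q (fun z => (C z.1, D z.1, A z.2, B z.1)) = entropy q (fun z => (A z.2, B z.1, C z.1, D z.1)) :=
    entropy_congr q (by intro z z'; simp only [Prod.mk.injEq]; tauto)
  have g14 : entropy q (fun z => (C z.1, A z.2, B z.1)) = entropy q (fun z => (A z.2, B z.1, C z.1)) :=
    entropy_congr q (by intro z z'; simp only [Prod.mk.injEq]; tauto)
  have g15 : entropy q (fun z => (D z.1, A z.2, B z.1)) = entropy q (fun z => (A z.2, B z.1, D z.1)) :=
    entropy_congr q (by intro z z'; simp only [Prod.mk.injEq]; tauto)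
  linarith [cv0, cv1, cv2, cv3, cv4, cv5, cv6, cv7, cv8, cv9, cv10, cv11, dECD, dEC, dED, dE, hci, s1, s2, s3, s4, s5, s6, s7, s8, s9, s10, s11, g1, g2, g3, g4, g5, g6, g7, g8, g9, g10, g11, g12, g13, g14, g15]


end ZY

lemma entropy_pair_left {Ω α κ : Type*} [Fintype Ω] (p : Ω → ℝ) (F : Ω → α) (G : Ω → κ)
    (hdet : ∀ ω ω', F ω = F ω' → G ω = G ω') :
    entropy p (fun ω => (F ω, G ω)) = entropy p F := by
  apply entropy_congr p
  intro ω ω'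
  constructor
  · intro h
    exact congrArg Prod.fst h
  · intro h
    rw [Prod.mk.injEq]
    exact ⟨h, hdet ω ω' h⟩

/-- If the marginal entropies of `(X,Y), (A,X), (A,Y), (B,X), (B,Y)` are at
most `3t`, that of `C` is at most `2t`, and the six listed conditional
entropies of the full tuple vanish, then `H[A,B,X,Y,C] ≤ (43/11)·t`. -/
theorem zhang_yeung_entropic_bound {Ω α β γ δ ε : Type*} [Fintype Ω]
    [Fintype α] [Fintype β] [Fintype γ] [Fintype δ] [Fintype ε]
    (p : Ω → ℝ) (hp : ∀ ω, 0 ≤ p ω) (hp1 : ∑ ω, p ω = 1)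
    (A : Ω → α) (B : Ω → β) (X : Ω → γ) (Y : Ω → δ) (C : Ω → ε)
    (t : ℝ) (ht : 0 ≤ t)
    (hXY : entropy p (fun ω => (X ω, Y ω)) ≤ 3 * t)
    (hAX : entropy p (fun ω => (A ω, X ω)) ≤ 3 * t)
    (hAY : entropy p (fun ω => (A ω, Y ω)) ≤ 3 * t)
    (hBX : entropy p (fun ω => (B ω, X ω)) ≤ 3 * t)
    (hBY : entropy p (fun ω => (B ω, Y ω)) ≤ 3 * t)
    (hC : entropy p C ≤ 2 * t)
    (hAB : condEntropy p (fun ω => (A ω, B ω, X ω, Y ω, C ω)) (fun ω => (A ω, B ω)) = 0)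
    (hAXY : condEntropy p (fun ω => (A ω, B ω, X ω, Y ω, C ω)) (fun ω => (A ω, X ω, Y ω)) = 0)
    (hBXY : condEntropy p (fun ω => (A ω, B ω, X ω, Y ω, C ω)) (fun ω => (B ω, X ω, Y ω)) = 0)
    (hAC : condEntropy p (fun ω => (A ω, B ω, X ω, Y ω, C ω)) (fun ω => (A ω, C ω)) = 0)
    (hXC : condEntropy p (fun ω => (A ω, B ω, X ω, Y ω, C ω)) (fun ω => (X ω, C ω)) = 0)
    (hYC : condEntropy p (fun ω => (A ω, B ω, X ω, Y ω, C ω)) (fun ω => (Y ω, C ω)) = 0) :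
    entropy p (fun ω => (A ω, B ω, X ω, Y ω, C ω)) ≤ (43 / 11) * t := by
  classical
  set F := fun ω => (A ω, B ω, X ω, Y ω, C ω) with hF
  simp only [condEntropy] at hAB hAXY hBXY hAC hXC hYC
  have eAB : entropy p F = entropy p (fun ω => (A ω, B ω)) := by
    have h1 : entropy p (fun ω => (F ω, (A ω, B ω))) = entropy p F :=
      entropy_pair_left p F (fun ω => (A ω, B ω)) (by
        intro ω ω' h
        simp only [hF, Prod.mk.injEq] at h
        simp [h.1, h.2.1])
    simp only [hF] at h1 hAB ⊢
    linarith
  have eAXY : entropy p F = entropy p (fun ω => (A ω, X ω, Y ω)) := by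
    have h1 : entropy p (fun ω => (F ω, (A ω, X ω, Y ω))) = entropy p F :=
      entropy_pair_left p F (fun ω => (A ω, X ω, Y ω)) (by
        intro ω ω' h
        simp only [hF, Prod.mk.injEq] at h
        simp [h.1, h.2.2.1, h.2.2.2.1])
    simp only [hF] at h1 hAXY ⊢
    linarith
  have eBXY : entropy p F = entropy p (fun ω => (B ω, X ω, Y ω)) := by
    have h1 : entropy p (fun ω => (F ω, (B ω, X ω, Y ω))) = entropy p F :=
      entropy_pair_left p F (fun ω => (B ω, X ω, Y ω)) (by
        intro ω ω' h
        simp only [hF, Prod.mk.injEq] at h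
        simp [h.2.1, h.2.2.1, h.2.2.2.1])
    simp only [hF] at h1 hBXY ⊢
    linarith
  have eXC : entropy p F = entropy p (fun ω => (X ω, C ω)) := by
    have h1 : entropy p (fun ω => (F ω, (X ω, C ω))) = entropy p F :=
      entropy_pair_left p F (fun ω => (X ω, C ω)) (by
        intro ω ω' h
        simp only [hF, Prod.mk.injEq] at h
        simp [h.2.2.1, h.2.2.2.2])
    simp only [hF] at h1 hXC ⊢
    linarith
  have eYC : entropy p F = entropy p (fun ω => (Y ω, C ω)) := by
    have h1 : entropy p (fun ω => (F ω, (Y ω, C ω))) = entropy p F :=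
      entropy_pair_left p F (fun ω => (Y ω, C ω)) (by
        intro ω ω' h
        simp only [hF, Prod.mk.injEq] at h
        simp [h.2.2.2.1, h.2.2.2.2])
    simp only [hF] at h1 hYC ⊢
    linarith
  have zy1 := zy_ineq p hp hp1 A B X Y
  have zy2 := zy_ineq p hp hp1 B A X Y
  have gBA : entropy p (fun ω => (B ω, A ω)) = entropy p (fun ω => (A ω, B ω)) :=
    entropy_congr p (by intro ω ω'; simp only [Prod.mk.injEq]; tauto)
  have sAB := entropy_subadd p hp hp1 A B
  have sXC := entropy_subadd p hp hp1 X C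
  have sYC := entropy_subadd p hp hp1 Y C
  simp only [hF] at eAB eAXY eBXY eXC eYC ⊢
  linarith [zy1, zy2, gBA, sAB, sXC, sYC, eAB, eAXY, eBXY, eXC, eYC,
    hXY, hAX, hAY, hBX, hBY, hC, ht]
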